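/- In a poset P, for every directed subset D and every x ∈ D^δ, the monotone net D converges to x in the upper topology υ(P); conversely if D converges to x in the upper topology then x ∈ D^δ. Hence the convergent pairs (D, x) of directed subsets with limits in (P, υ(P)) are exactly {(D, x) : D directed, x ∈ D^δ}. -/
import Mathlib


/-- In a poset `P` with the upper topology `υ(P)` (generated by complements of
principal down-sets), a directed subset `D`, viewed as a monotone net indexed by
itself, converges to `x` iff `x ∈ D^δ = (D^↑)^↓`. -/
theorem stmt12 {P : Type} [PartialOrder P]
    (υ : TopologicalSpace P)
    (hυ : υ = TopologicalSpace.generateFrom {U : Set P | ∃ y : P, U = (Set.Iic y)ᶜ}) :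
    ∀ D : Set P, D.Nonempty → DirectedOn (· ≤ ·) D → ∀ x : P,
      ((∀ U : Set P, υ.IsOpen U → x ∈ U → ∃ d ∈ D, ∀ e ∈ D, d ≤ e → e ∈ U) ↔
        x ∈ lowerBounds (upperBounds D)) := by
  intro D hne hdir x
  constructor
  · intro h b hb
    by_contra hxb
    obtain ⟨d, hdD, hd⟩ := h (Set.Iic b)ᶜ (by rw [hυ]; exact .basic _ ⟨b, rfl⟩) hxb
    exact hd d hdD le_rfl (hb hdD)
  · intro hx U hU hxU
    rw [hυ] at hU
    induction hU with
    | basic U hU =>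
      obtain ⟨y, rfl⟩ := hU
      have : y ∉ upperBounds D := fun hy => hxU (hx hy)
      obtain ⟨d, hdD, hdy⟩ := by simpa [upperBounds] using this
      exact ⟨d, hdD, fun e heD hde hey => hdy (hde.trans hey)⟩
    | univ => exact ⟨hne.choose, hne.choose_spec, fun _ _ _ => trivial⟩
    | inter U V hU hV ihU ihV =>
      obtain ⟨d, hdD, hd⟩ := ihU hxU.1
      obtain ⟨d', hd'D, hd'⟩ := ihV hxU.2
      obtain ⟨c, hcD, hdc, hd'c⟩ := hdir d hdD d' hd'D
      exact ⟨c, hcD, fun e heD hce =>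
        ⟨hd e heD (hdc.trans hce), hd' e heD (hd'c.trans hce)⟩⟩
    | sUnion S hS ih =>
      obtain ⟨U, hUS, hxU⟩ := hxU
      obtain ⟨d, hdD, hd⟩ := ih U hUS hxU
      exact ⟨d, hdD, fun e heD hde => ⟨U, hUS, hd e heD hde⟩⟩
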